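/- Let I and J be two NBC sets of the same cardinality ℓ of a matroid M (with linearly ordered ground set), listed in increasing order as I = (i_1 < ... < i_ℓ) and J = (j_1, ..., j_ℓ) after applying a permutation τ. If the flags of flats cl({i_ℓ}) ⊆ cl({i_{ℓ-1}, i_ℓ}) ⊆ ... ⊆ cl(I) and cl({j_{τ(ℓ)}}) ⊆ cl({j_{τ(ℓ-1)}, j_{τ(ℓ)}}) ⊆ ... ⊆ cl(J) coincide for some permutation τ of {1,...,ℓ}, then I = J. -/
import Mathlib


open Set

/-- A circuit of a matroid: a minimal dependent set. -/
def IsCircuit {α : Type*} (M : Matroid α) (C : Set α) : Prop :=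
  M.Dep C ∧ ∀ D, D ⊂ C → ¬ M.Dep D

/-- A broken circuit: a circuit `C` with `|C| > 1` with its minimum element removed. -/
def BrokenCircuit {α : Type*} [LinearOrder α] (M : Matroid α) (B : Set α) : Prop :=
  ∃ C m, IsCircuit M C ∧ m ∈ C ∧ (∀ y ∈ C, m ≤ y) ∧ (C \ {m}).Nonempty ∧ B = C \ {m}

/-- A no-broken-circuit (NBC) set: an independent set containing no broken circuit. -/
def NBC {α : Type*} [LinearOrder α] (M : Matroid α) (X : Set α) : Prop :=
  M.Indep X ∧ ∀ B, BrokenCircuit M B → ¬ B ⊆ X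

/-- Every finite dependent set contains a circuit. -/
lemma exists_circuit_subset_aux {α : Type*} (M : Matroid α) :
    ∀ n (D : Set α), D.Finite → D.ncard ≤ n → M.Dep D → ∃ C, C ⊆ D ∧ IsCircuit M C := by
  intro n
  induction n with
  | zero =>
    intro D hfin hcard hdep
    have hD : D = ∅ := by
      rw [← Set.ncard_eq_zero hfin]; omega
    exact absurd (hD ▸ hdep).not_indep (by simp [M.empty_indep])
  | succ n ih =>
    intro D hfin hcard hdep
    by_cases h : ∀ D', D' ⊂ D → ¬ M.Dep D'
    · exact ⟨D, subset_rfl, hdep, h⟩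
    · push_neg at h
      obtain ⟨D', hss, hdep'⟩ := h
      have hlt : D'.ncard < D.ncard := Set.ncard_lt_ncard hss hfin
      obtain ⟨C, hC1, hC2⟩ := ih D' (hfin.subset hss.subset) (by omega) hdep'
      exact ⟨C, hC1.trans hss.subset, hC2⟩

/-- In an NBC set `X`, any non-loop element of the closure of a subset `S ⊆ X`
is bounded below by some element of `S`. -/
lemma nbc_exists_le {α : Type*} [LinearOrder α] {M : Matroid α} {X S : Set α} {y : α}
    (hE : M.E.Finite) (hX : NBC M X) (hS : S ⊆ X) (hy : M.Indep {y})
    (hycl : y ∈ M.closure S) : ∃ s ∈ S, s ≤ y := by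
  by_contra h
  push_neg at h
  have hyS : y ∉ S := fun hyS => lt_irrefl y (h y hyS)
  have hSindep : M.Indep S := hX.1.subset hS
  have hdep : M.Dep (insert y S) := by
    rcases hSindep.mem_closure_iff.mp hycl with h' | h'
    · exact h'
    · exact absurd h' hyS
  obtain ⟨C, hCsub, hC⟩ := exists_circuit_subset_aux M (insert y S).ncard _
    (hE.subset hdep.subset_ground) le_rfl hdep
  have hyC : y ∈ C := by
    by_contra hyC
    have hCS : C ⊆ S := fun z hz => (hCsub hz).resolve_left (fun h' => hyC (h' ▸ hz))
    exact hC.1.not_indep (hSindep.subset hCS)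
  have hmin : ∀ z ∈ C, y ≤ z := by
    intro z hz
    rcases hCsub hz with rfl | hz'
    · exact le_rfl
    · exact (h z hz').le
  have hne : (C \ {y}).Nonempty := by
    by_contra hne
    rw [Set.not_nonempty_iff_eq_empty, Set.diff_eq_empty] at hne
    have : C = {y} := subset_antisymm hne (Set.singleton_subset_iff.mpr hyC)
    exact (this ▸ hC.1).not_indep hy
  refine hX.2 (C \ {y}) ⟨C, y, hC, hyC, hmin, hne, rfl⟩ ?_
  intro z hz
  rcases hCsub hz.1 with rfl | hz'
  · exact absurd rfl hz.2
  · exact hS hz'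

/-- Let `I` and `J` be two NBC sets of cardinality `ℓ` of a matroid `M` on a linearly
ordered finite ground set, with `I` listed in increasing order by `i` and `J`
enumerated (in some order, i.e. after a permutation `τ`) by `j`.  If the associated
flags of flats `cl(i '' {k,...,ℓ-1})` and `cl(j '' {k,...,ℓ-1})` coincide for all
`k`, then `I = J`. -/
theorem nbc_flag_eq {α : Type*} [LinearOrder α] (M : Matroid α)
    (hE : M.E.Finite) (ℓ : ℕ) (I J : Set α)
    (hI : NBC M I) (hJ : NBC M J) (hIc : I.ncard = ℓ) (hJc : J.ncard = ℓ)
    (i j : Fin ℓ → α) (hi : StrictMono i) (hiI : Set.range i = I)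
    (hj : Function.Injective j) (hjJ : Set.range j = J)
    (hflag : ∀ k : Fin ℓ,
      M.closure (i '' {m | k ≤ m}) = M.closure (j '' {m | k ≤ m})) :
    I = J := by
  have hIE : I ⊆ M.E := hI.1.subset_ground
  have hJE : J ⊆ M.E := hJ.1.subset_ground
  have key : ∀ k : Fin ℓ, i k ∈ J := by
    intro k
    set T : Set (Fin ℓ) := {m | k ≤ m} with hT
    have hiT : i '' T ⊆ I := hiI ▸ Set.image_subset_range i T
    have hjT : j '' T ⊆ J := hjJ ▸ Set.image_subset_range j T
    have hikI : i k ∈ I := hiI ▸ Set.mem_range_self k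
    have h1 : i k ∈ M.closure (j '' T) := by
      rw [← hflag k]
      exact M.subset_closure _ (hiT.trans hIE) ⟨k, le_refl k, rfl⟩
    have hik_indep : M.Indep {i k} := hI.1.subset (Set.singleton_subset_iff.mpr hikI)
    obtain ⟨s, hsT, hs_le⟩ := nbc_exists_le hE hJ hjT hik_indep h1
    obtain ⟨m, hm, rfl⟩ := hsT
    have h2 : j m ∈ M.closure (i '' T) := by
      rw [hflag k]
      exact M.subset_closure _ (hjT.trans hJE) ⟨m, hm, rfl⟩
    have hjm_indep : M.Indep {j m} :=
      hJ.1.subset (Set.singleton_subset_iff.mpr (hjJ ▸ Set.mem_range_self m))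
    obtain ⟨t, htT, ht_le⟩ := nbc_exists_le hE hI hiT hjm_indep h2
    obtain ⟨m', hm', rfl⟩ := htT
    have heq : i k = j m :=
      le_antisymm (le_trans (hi.monotone hm') ht_le) hs_le
    exact heq ▸ hjT ⟨m, hm, rfl⟩
  have hIJ : I ⊆ J := by
    rw [← hiI]
    rintro x ⟨k, rfl⟩
    exact key k
  exact Set.eq_of_subset_of_ncard_le hIJ (by rw [hIc, hJc]) (hE.subset hJE)
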